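/- The multiplicative order of −b modulo M divides the period π(M). In particular, if p is odd and b = 1, then π(M) is even. -/

import Mathlib

open Polynomial

noncomputable def genFib {K : Type*} [Field K] (a b : K[X]) : ℕ → K[X]
  | 0 => 0
  | 1 => 1
  | n + 2 => a * genFib a b (n + 1) + b * genFib a b n

noncomputable def fibRank {K : Type*} [Field K] (a b M : K[X]) : ℕ :=
  sInf {n : ℕ | 0 < n ∧ M ∣ genFib a b n}

noncomputable def fibPeriod {K : Type*} [Field K] (a b M : K[X]) : ℕ :=
  sInf {n : ℕ | 0 < n ∧ M ∣ genFib a b n ∧ M ∣ (genFib a b (n + 1) - 1)}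

noncomputable def polyOrd {K : Type*} [Field K] (M g : K[X]) : ℕ :=
  orderOf (Ideal.Quotient.mk (Ideal.span {M}) g)

lemma genFib_add_two {K : Type*} [Field K] (a b : K[X]) (n : ℕ) :
    genFib a b (n + 2) = a * genFib a b (n + 1) + b * genFib a b n := rfl

lemma genFib_catalan {K : Type*} [Field K] (a b : K[X]) (n : ℕ) :
    genFib a b (n + 2) * genFib a b n - (genFib a b (n + 1)) ^ 2 = -(-b) ^ n := by
  induction n with
  | zero => simp [genFib]
  | succ m ih =>
    have h2 := genFib_add_two a b m
    have h3 := genFib_add_two a b (m + 1)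
    simp only [show m + 1 + 2 = m + 3 from rfl, show m + 1 + 1 = m + 2 from rfl] at h3 ⊢
    linear_combination genFib a b (m + 1) * h3 + (-b) * ih - genFib a b (m + 2) * h2

lemma key_pow {K : Type*} [Field K] (a b M : K[X]) (n : ℕ) (hn : 0 < n)
    (h1 : M ∣ genFib a b n) (h2 : M ∣ genFib a b (n + 1) - 1) :
    (Ideal.Quotient.mk (Ideal.span {M}) (-b)) ^ n = 1 := by
  obtain ⟨m, rfl⟩ : ∃ m, n = m + 1 := ⟨n - 1, (Nat.succ_pred_eq_of_pos hn).symm⟩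
  set mk := Ideal.Quotient.mk (Ideal.span {M}) with hmk
  have e1 : mk (genFib a b (m + 1)) = 0 := by
    rw [Ideal.Quotient.eq_zero_iff_mem, Ideal.mem_span_singleton]; exact h1
  have e2 : mk (genFib a b (m + 2)) = 1 := by
    have : mk (genFib a b (m + 2) - 1) = 0 := by
      rw [Ideal.Quotient.eq_zero_iff_mem, Ideal.mem_span_singleton]; exact h2
    rw [map_sub, map_one, sub_eq_zero] at this
    exact this
  have cat := congrArg mk (genFib_catalan a b m)
  simp only [map_sub, map_mul, map_pow, map_neg] at cat
  rw [e1, e2, one_mul] at cat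
  have hrec := congrArg mk (genFib_add_two a b m)
  simp only [map_add, map_mul] at hrec
  rw [e1, e2, mul_zero, zero_add] at hrec
  have hm : mk (genFib a b m) = -(-mk b) ^ m := by linear_combination cat
  rw [hm] at hrec
  rw [map_neg]
  calc (-mk b) ^ (m + 1) = mk b * -(-mk b) ^ m := by ring
    _ = 1 := hrec.symm

theorem stmt13 {K : Type*} [Field K] [Fintype K] (p : ℕ) [CharP K p]
    (a b : K[X]) (hb : b ≠ 0)
    (M : K[X]) (hM : 0 < M.natDegree) (hco : IsCoprime b M) :
    polyOrd M (-b) ∣ fibPeriod a b M ∧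
      (Odd p → b = 1 → 2 ∣ fibPeriod a b M) := by
  have key1 : polyOrd M (-b) ∣ fibPeriod a b M := by
    rcases Set.eq_empty_or_nonempty
        {n : ℕ | 0 < n ∧ M ∣ genFib a b n ∧ M ∣ (genFib a b (n + 1) - 1)} with h | h
    · rw [fibPeriod, h, Nat.sInf_empty]
      exact dvd_zero _
    · have hmem := Nat.sInf_mem h
      obtain ⟨hpos, hd1, hd2⟩ := hmem
      exact orderOf_dvd_of_pow_eq_one (key_pow a b M _ hpos hd1 hd2)
  refine ⟨key1, fun hp hb1 => ?_⟩
  subst hb1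
  have h2K : (2 : K) ≠ 0 := by
    intro h
    have hdvd : p ∣ 2 := (CharP.cast_eq_zero_iff K p 2).mp h
    have hub : p ≤ 2 := Nat.le_of_dvd (by norm_num) hdvd
    have hlb : 0 < p := Nat.pos_of_dvd_of_pos hdvd (by norm_num)
    interval_cases p
    · exact CharP.char_ne_one K 1 rfl
    · norm_num [Nat.odd_iff] at hp
  have hC : ((-1 : K[X]) - 1) = C (-2) := by
    rw [← C_1, ← C_neg, ← C_sub]
    norm_num
  have hx : (Ideal.Quotient.mk (Ideal.span {M}) (-(1:K[X]))) ≠ 1 := by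
    intro h
    have h0 : Ideal.Quotient.mk (Ideal.span {M}) ((-1 : K[X]) - 1) = 0 := by
      rw [map_sub, h, map_one, sub_self]
    rw [Ideal.Quotient.eq_zero_iff_mem, Ideal.mem_span_singleton] at h0
    rw [hC] at h0
    have hne : (C (-2) : K[X]) ≠ 0 := by
      rw [Polynomial.C_ne_zero]
      simpa using h2K
    have hd := Polynomial.natDegree_le_of_dvd h0 hne
    rw [Polynomial.natDegree_C] at hd
    omega
  have hord : polyOrd M (-(1:K[X])) = 2 := by
    have : Fact (Nat.Prime 2) := ⟨Nat.prime_two⟩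
    refine orderOf_eq_prime ?_ hx
    rw [map_neg, map_one]; exact neg_one_sq (R := K[X] ⧸ Ideal.span {M})
  rw [← hord]
  exact key1
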